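/- Let g be the probability mass function of a sum of m independent Bernoulli random variables. Then for every integer k: g_{k-1}·g_k² − 2·g_{k-1}²·g_{k+1} + g_{k-2}·g_k·g_{k+1} ≥ 0. -/

import Mathlib

set_option maxHeartbeats 2000000

open Finset

/-- Probability mass function of a sum of independent Bernoulli random variables
indexed by the finite set `I`, with parameters `p i`. -/
def bernoulliSumPMF (I : Finset ℕ) (p : ℕ → ℝ) (k : ℤ) : ℝ :=
  if 0 ≤ k then
    ∑ S ∈ I.powersetCard k.toNat, (∏ i ∈ S, p i) * (∏ i ∈ I \ S, (1 - p i))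
  else 0

/-- The four invariants: nonnegativity, TP2 (two-point rearrangement), contiguity
of the support, and the cubic inequality C1. -/
def BernInv (g : ℤ → ℝ) : Prop :=
  (∀ k, 0 ≤ g k) ∧
  (∀ a b c d : ℤ, a + b = c + d → c ≤ a → a ≤ b → b ≤ d → g c * g d ≤ g a * g b) ∧
  (∀ a b c : ℤ, a ≤ b → b ≤ c → 0 < g a → 0 < g c → 0 < g b) ∧
  (∀ k : ℤ, 0 ≤ g (k - 1) * g k ^ 2 - 2 * g (k - 1) ^ 2 * g (k + 1)
      + g (k - 2) * g k * g (k + 1))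

lemma inv_ext {g h : ℤ → ℝ} (e : ∀ k, g k = h k) (H : BernInv h) : BernInv g := by
  obtain ⟨N, T, CT, C⟩ := H
  refine ⟨fun k => by rw [e]; exact N k,
    fun a b c d h1 h2 h3 h4 => by rw [e, e, e, e]; exact T a b c d h1 h2 h3 h4,
    fun a b c h1 h2 ha hc => by
      rw [e] at ha hc ⊢; exact CT a b c h1 h2 ha hc,
    fun k => by simp only [e]; exact C k⟩

lemma inv_shift {h : ℤ → ℝ} (H : BernInv h) : BernInv (fun k => h (k - 1)) := by
  obtain ⟨N, T, CT, C⟩ := H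
  refine ⟨fun k => N (k - 1),
    fun a b c d h1 h2 h3 h4 =>
      T (a - 1) (b - 1) (c - 1) (d - 1) (by omega) (by omega) (by omega) (by omega),
    fun a b c h1 h2 ha hc =>
      CT (a - 1) (b - 1) (c - 1) (by omega) (by omega) ha hc,
    fun k => by
      dsimp only
      rw [show k + 1 - 1 = k - 1 + 1 from by ring, show k - 2 - 1 = k - 1 - 2 from by ring,
        show k - 1 - 1 = k - 1 - 1 from rfl]
      exact C (k - 1)⟩

lemma inv_delta : BernInv (fun k : ℤ => if k = 0 then (1 : ℝ) else 0) := by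
  have N : ∀ k : ℤ, (0:ℝ) ≤ if k = 0 then (1:ℝ) else 0 := by
    intro k; split <;> norm_num
  refine ⟨N, ?_, ?_, ?_⟩
  · intro a b c d hs h1 h2 h3
    dsimp only
    by_cases hc : c = 0
    · by_cases hd : d = 0
      · have ha : a = 0 := by omega
        have hb : b = 0 := by omega
        simp [ha, hb, hc, hd]
      · simp only [if_neg hd, mul_zero]
        exact mul_nonneg (N a) (N b)
    · simp only [if_neg hc, zero_mul]
      exact mul_nonneg (N a) (N b)
  · intro a b c h1 h2 ha hc
    dsimp only at ha hc ⊢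
    by_cases ha0 : a = 0
    · by_cases hc0 : c = 0
      · have : b = 0 := by omega
        simp [this]
      · simp [hc0] at hc
    · simp [ha0] at ha
  · intro k
    dsimp only
    by_cases h1 : k - 1 = 0
    · have e2 : k ≠ 0 := by omega
      have e3 : k + 1 ≠ 0 := by omega
      simp [e2, e3]
    · by_cases h2 : k - 2 = 0
      · have e3 : k ≠ 0 := by omega
        simp [h1, e3]
      · simp [h1, h2]

lemma bspmf_zero (p : ℕ → ℝ) (k : ℤ) :
    bernoulliSumPMF (range 0) p k = if k = 0 then 1 else 0 := by
  unfold bernoulliSumPMF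
  by_cases hk : 0 ≤ k
  · by_cases hk0 : k = 0
    · subst hk0
      simp
    · have h1 : k.toNat ≠ 0 := by omega
      have h2 : (range 0).card < k.toNat := by simp; omega
      rw [if_pos hk, if_neg hk0, Finset.powersetCard_eq_empty.mpr h2, Finset.sum_empty]
  · rw [if_neg hk, if_neg (by omega : ¬ k = 0)]

lemma bspmf_succ (m : ℕ) (p : ℕ → ℝ) (k : ℤ) :
    bernoulliSumPMF (range (m + 1)) p k
      = (1 - p m) * bernoulliSumPMF (range m) p k
        + p m * bernoulliSumPMF (range m) p (k - 1) := by
  unfold bernoulliSumPMF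
  by_cases hk : 0 ≤ k
  · by_cases hk1 : 0 ≤ k - 1
    · -- k ≥ 1
      have hn : k.toNat = (k - 1).toNat + 1 := by omega
      rw [if_pos hk, if_pos hk, if_pos hk1, hn, Finset.range_add_one,
        Finset.powersetCard_succ_insert Finset.notMem_range_self]
      have hdisj : Disjoint ((range m).powersetCard ((k-1).toNat + 1))
          (((range m).powersetCard ((k-1).toNat)).image (insert m)) := by
        rw [Finset.disjoint_left]
        intro S hS hS'
        have hsub : S ⊆ range m := (Finset.mem_powersetCard.mp hS).1
        obtain ⟨S', _, rfl⟩ := Finset.mem_image.mp hS'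
        exact (Finset.mem_range.mp (hsub (Finset.mem_insert_self m S'))).ne rfl
      rw [Finset.sum_union hdisj]
      have hcompl : ∀ S : Finset ℕ, S ⊆ range m →
          insert m (range m) \ insert m S = range m \ S := by
        intro S hSsub
        ext x
        simp only [Finset.mem_sdiff, Finset.mem_insert, Finset.mem_range, not_or]
        constructor
        · rintro ⟨hx1, hx2, hx3⟩
          rcases hx1 with h | h
          · exact absurd h hx2
          · exact ⟨h, hx3⟩
        · rintro ⟨hx1, hx2⟩
          exact ⟨Or.inr hx1, by omega, hx2⟩
      have e1 : ∑ S ∈ (range m).powersetCard ((k-1).toNat + 1),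
          (∏ i ∈ S, p i) * (∏ i ∈ insert m (range m) \ S, (1 - p i))
          = (1 - p m) * ∑ S ∈ (range m).powersetCard ((k-1).toNat + 1),
              (∏ i ∈ S, p i) * (∏ i ∈ range m \ S, (1 - p i)) := by
        rw [Finset.mul_sum]
        refine Finset.sum_congr rfl fun S hS => ?_
        have hsub : S ⊆ range m := (Finset.mem_powersetCard.mp hS).1
        have hmS : m ∉ S := fun h => (Finset.mem_range.mp (hsub h)).ne rfl
        have : insert m (range m) \ S = insert m (range m \ S) := by
          rw [Finset.insert_sdiff_of_notMem _ hmS]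
        rw [this, Finset.prod_insert (by simp)]
        ring
      have e2 : ∑ S ∈ ((range m).powersetCard ((k-1).toNat)).image (insert m),
          (∏ i ∈ S, p i) * (∏ i ∈ insert m (range m) \ S, (1 - p i))
          = p m * ∑ S ∈ (range m).powersetCard ((k-1).toNat),
              (∏ i ∈ S, p i) * (∏ i ∈ range m \ S, (1 - p i)) := by
        rw [Finset.sum_image ?inj]
        case inj =>
          intro S hS S' hS' he
          have h1 : m ∉ S := fun h =>
            (Finset.mem_range.mp ((Finset.mem_powersetCard.mp hS).1 h)).ne rfl
          have h2 : m ∉ S' := fun h =>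
            (Finset.mem_range.mp ((Finset.mem_powersetCard.mp hS').1 h)).ne rfl
          rw [← Finset.erase_insert h1, ← Finset.erase_insert h2, he]
        rw [Finset.mul_sum]
        refine Finset.sum_congr rfl fun S hS => ?_
        have hsub : S ⊆ range m := (Finset.mem_powersetCard.mp hS).1
        have hmS : m ∉ S := fun h => (Finset.mem_range.mp (hsub h)).ne rfl
        rw [hcompl S hsub, Finset.prod_insert hmS]
        ring
      rw [e1, e2]
    · -- k = 0
      have hk0 : k = 0 := by omega
      subst hk0
      rw [if_pos hk, if_pos hk, if_neg hk1]
      simp [Finset.prod_range_succ]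
      ring
  · have hk1 : ¬ (0 ≤ k - 1) := by omega
    rw [if_neg hk, if_neg hk, if_neg hk1]
    ring

lemma sum32_nonneg (q r x0 x1 x2 x3 x4 U V1 V2 : ℝ)
    (hq : 0 ≤ q) (hr : 0 ≤ r) (h0 : 0 ≤ x0) (h1 : 0 ≤ x1) (h2 : 0 ≤ x2)
    (h3 : 0 ≤ x3) (h4 : 0 ≤ x4) (hU : 0 ≤ U) (hV1 : 0 ≤ V1) (hV2 : 0 ≤ V2) :
    0 ≤
    r ^ 3 * V2 * x1 ^ 4 * x2 ^ 4 * x3 ^ 3 * x4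
    + q ^ 2 * r * V1 ^ 2 * V2 * x1 ^ 2 * x2 ^ 2 * x3 * x4
    + 2 * q ^ 2 * r * V1 ^ 3 * x1 * x2 ^ 2 * x3 * x4 ^ 2
    + 2 * q * r ^ 2 * U * V2 * x1 ^ 3 * x2 ^ 3 * x3 ^ 3 * x4
    + q * r ^ 2 * U * V1 * x1 ^ 2 * x2 ^ 3 * x3 ^ 3 * x4 ^ 2
    + 3 * q ^ 2 * r * U * V1 * V2 * x1 ^ 2 * x2 ^ 2 * x3 ^ 2 * x4
    + 9 * q ^ 2 * r * U * V1 ^ 2 * x1 * x2 ^ 2 * x3 ^ 2 * x4 ^ 2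
    + q ^ 3 * U * V1 ^ 2 * V2 * x1 * x2 * x3 * x4
    + 2 * q ^ 3 * U * V1 ^ 3 * x2 * x3 * x4 ^ 2
    + 2 * q ^ 2 * r * U ^ 2 * V2 * x1 ^ 2 * x2 ^ 2 * x3 ^ 3 * x4
    + 11 * q ^ 2 * r * U ^ 2 * V1 * x1 * x2 ^ 2 * x3 ^ 3 * x4 ^ 2
    + 2 * q ^ 3 * U ^ 2 * V1 * V2 * x1 * x2 * x3 ^ 2 * x4
    + 7 * q ^ 3 * U ^ 2 * V1 ^ 2 * x2 * x3 ^ 2 * x4 ^ 2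
    + 2 * q ^ 2 * r * U ^ 3 * x1 * x2 ^ 2 * x3 ^ 4 * x4 ^ 2
    + 6 * q ^ 3 * U ^ 3 * V1 * x2 * x3 ^ 3 * x4 ^ 2
    + 2 * q * r ^ 2 * x0 * V2 * x1 ^ 3 * x2 ^ 4 * x3 ^ 3 * x4
    + q * r ^ 2 * x0 * V1 * x1 ^ 2 * x2 ^ 4 * x3 ^ 3 * x4 ^ 2
    + q ^ 2 * r * x0 * V1 * V2 * x1 ^ 2 * x2 ^ 3 * x3 ^ 2 * x4
    + 3 * q ^ 2 * r * x0 * V1 ^ 2 * x1 * x2 ^ 3 * x3 ^ 2 * x4 ^ 2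
    + q ^ 3 * x0 * V1 ^ 2 * V2 * x1 * x2 ^ 2 * x3 * x4
    + 2 * q ^ 3 * x0 * V1 ^ 3 * x2 ^ 2 * x3 * x4 ^ 2
    + 2 * q ^ 2 * r * x0 * U * V2 * x1 ^ 2 * x2 ^ 3 * x3 ^ 3 * x4
    + 7 * q ^ 2 * r * x0 * U * V1 * x1 * x2 ^ 3 * x3 ^ 3 * x4 ^ 2
    + 3 * q ^ 3 * x0 * U * V1 * V2 * x1 * x2 ^ 2 * x3 ^ 2 * x4
    + 10 * q ^ 3 * x0 * U * V1 ^ 2 * x2 ^ 2 * x3 ^ 2 * x4 ^ 2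
    + 11 * q ^ 3 * x0 * U ^ 2 * V1 * x2 ^ 2 * x3 ^ 3 * x4 ^ 2
    + q ^ 2 * r * x0 ^ 2 * V2 * x1 ^ 2 * x2 ^ 4 * x3 ^ 3 * x4
    + 2 * q ^ 2 * r * x0 ^ 2 * V1 * x1 * x2 ^ 4 * x3 ^ 3 * x4 ^ 2
    + q ^ 3 * x0 ^ 2 * V1 * V2 * x1 * x2 ^ 3 * x3 ^ 2 * x4
    + 3 * q ^ 3 * x0 ^ 2 * V1 ^ 2 * x2 ^ 3 * x3 ^ 2 * x4 ^ 2
    + 6 * q ^ 3 * x0 ^ 2 * U * V1 * x2 ^ 3 * x3 ^ 3 * x4 ^ 2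
    + q ^ 3 * x0 ^ 3 * V1 * x2 ^ 4 * x3 ^ 3 * x4 ^ 2 := by positivity

lemma key_main (x0 x1 x2 x3 x4 q : ℝ)
    (h0 : 0 ≤ x0) (p1 : 0 < x1) (p2 : 0 < x2) (p3 : 0 < x3) (p4 : 0 < x4)
    (hq0 : 0 ≤ q) (hq1 : q ≤ 1)
    (hU : 0 ≤ x1 ^ 2 - x0 * x2)
    (hV1 : 0 ≤ x1 * x2 ^ 2 - 2 * x1 ^ 2 * x3 + x0 * x2 * x3)
    (hV2 : 0 ≤ x2 * x3 ^ 2 - 2 * x2 ^ 2 * x4 + x1 * x3 * x4) :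
    0 ≤ ((1 - q) * x2 + q * x1) * ((1 - q) * x3 + q * x2) ^ 2
        - 2 * ((1 - q) * x2 + q * x1) ^ 2 * ((1 - q) * x4 + q * x3)
        + ((1 - q) * x1 + q * x0) * ((1 - q) * x3 + q * x2) * ((1 - q) * x4 + q * x3) := by
  have hr : (0:ℝ) ≤ 1 - q := by linarith
  have hRHS := sum32_nonneg q (1 - q) x0 x1 x2 x3 x4 (x1 ^ 2 - x0 * x2)
    (x1 * x2 ^ 2 - 2 * x1 ^ 2 * x3 + x0 * x2 * x3)
    (x2 * x3 ^ 2 - 2 * x2 ^ 2 * x4 + x1 * x3 * x4)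
    hq0 hr h0 p1.le p2.le p3.le p4.le hU hV1 hV2
  have hD : (0:ℝ) < x1 ^ 4 * x2 ^ 4 * x3 ^ 3 * x4 := by positivity
  nlinarith [hRHS, hD]

lemma keyD_aux (q r x1 x2 x3 U vN V1 g : ℝ)
    (hq : 0 ≤ q) (hr : 0 ≤ r) (h1 : 0 ≤ x1) (h2 : 0 ≤ x2) (h3 : 0 ≤ x3)
    (hU : 0 ≤ U) (hvN : 0 ≤ vN) (hV1 : 0 ≤ V1) (hg : 0 ≤ g) :
    0 ≤ x2 * x3 ^ 2 * (q ^ 2 * r * U * vN * x3 + q ^ 2 * V1 * g * x2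
        + r * g ^ 2 * x1 * x3 ^ 2) := by positivity

lemma key_right (x0 x1 x2 x3 q : ℝ)
    (h0 : 0 ≤ x0) (p1 : 0 < x1) (p2 : 0 < x2) (p3 : 0 < x3)
    (hq0 : 0 ≤ q) (hq1 : q ≤ 1)
    (hU : 0 ≤ x1 ^ 2 - x0 * x2)
    (hvN : 0 ≤ x2 ^ 2 - x1 * x3)
    (hV1 : 0 ≤ x1 * x2 ^ 2 - 2 * x1 ^ 2 * x3 + x0 * x2 * x3) :
    0 ≤ ((1 - q) * x2 + q * x1) * ((1 - q) * x3 + q * x2) ^ 2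
        - 2 * ((1 - q) * x2 + q * x1) ^ 2 * ((1 - q) * 0 + q * x3)
        + ((1 - q) * x1 + q * x0) * ((1 - q) * x3 + q * x2) * ((1 - q) * 0 + q * x3) := by
  have hr : (0:ℝ) ≤ 1 - q := by linarith
  have hg : (0:ℝ) ≤ (1 - q) * x2 + q * x1 := by
    have := p1.le; have := p2.le; nlinarith
  have hRHS := keyD_aux q (1 - q) x1 x2 x3 (x1 ^ 2 - x0 * x2) (x2 ^ 2 - x1 * x3)
    (x1 * x2 ^ 2 - 2 * x1 ^ 2 * x3 + x0 * x2 * x3) ((1 - q) * x2 + q * x1)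
    hq0 hr p1.le p2.le p3.le hU hvN hV1 hg
  have hD : (0:ℝ) < x1 * x2 ^ 2 * x3 ^ 2 := by positivity
  nlinarith [hRHS, hD]

lemma step_inv (h : ℤ → ℝ) (q : ℝ) (hq0 : 0 < q) (hq1 : q < 1) (H : BernInv h) :
    BernInv (fun k => (1 - q) * h k + q * h (k - 1)) := by
  obtain ⟨N, T, CT, C⟩ := H
  have hr : (0:ℝ) ≤ 1 - q := by linarith
  have gN : ∀ k : ℤ, 0 ≤ (1 - q) * h k + q * h (k - 1) := by
    intro k
    have := N k; have := N (k - 1)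
    nlinarith
  refine ⟨gN, ?_, ?_, ?_⟩
  · -- TP2
    intro a b c d hs h1 h2 h3
    dsimp only
    by_cases hca : c = a
    · have hdb : d = b := by omega
      subst hca; subst hdb; exact le_refl _
    · have X := T a b c d hs h1 h2 h3
      have Y := T (a-1) (b-1) (c-1) (d-1) (by omega) (by omega) (by omega) (by omega)
      have Z1 := T (a-1) b (c-1) d (by omega) (by omega) (by omega) (by omega)
      have Z2 : h c * h (d-1) ≤ h a * h (b-1) := by
        by_cases hab : a ≤ b - 1
        · exact T a (b-1) c (d-1) (by omega) (by omega) hab (by omega)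
        · have hba : b = a := by omega
          subst hba
          have := T (b-1) b c (d-1) (by omega) (by omega) (by omega) (by omega)
          nlinarith [this]
      have e1 : 0 ≤ (1-q)^2 * (h a * h b - h c * h d) :=
        mul_nonneg (sq_nonneg _) (by linarith)
      have e2 : 0 ≤ q^2 * (h (a-1) * h (b-1) - h (c-1) * h (d-1)) :=
        mul_nonneg (sq_nonneg _) (by linarith)
      have e3 : 0 ≤ q*(1-q) * ((h (a-1) * h b - h (c-1) * h d)
          + (h a * h (b-1) - h c * h (d-1))) :=
        mul_nonneg (mul_nonneg hq0.le hr) (by linarith)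
      nlinarith [e1, e2, e3]
  · -- contiguity
    intro a b c hab hbc ha hc
    dsimp only at ha hc ⊢
    by_cases hba : b = a
    · subst hba; exact ha
    · by_cases hbc2 : b = c
      · subst hbc2; exact hc
      · have ha' : 0 < h a ∨ 0 < h (a-1) := by
          by_contra hcon
          push_neg at hcon
          have e1 : h a = 0 := le_antisymm hcon.1 (N a)
          have e2 : h (a-1) = 0 := le_antisymm hcon.2 (N (a-1))
          rw [e1, e2] at ha; norm_num at ha
        have hc' : 0 < h c ∨ 0 < h (c-1) := by
          by_contra hcon
          push_neg at hcon
          have e1 : h c = 0 := le_antisymm hcon.1 (N c)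
          have e2 : h (c-1) = 0 := le_antisymm hcon.2 (N (c-1))
          rw [e1, e2] at hc; norm_num at hc
        obtain ⟨i, hi1, hi2, hi⟩ : ∃ i, a - 1 ≤ i ∧ i ≤ a ∧ 0 < h i := by
          rcases ha' with h1 | h1
          exacts [⟨a, by omega, le_refl a, h1⟩, ⟨a-1, le_refl _, by omega, h1⟩]
        obtain ⟨j, hj1, hj2, hj⟩ : ∃ j, c - 1 ≤ j ∧ j ≤ c ∧ 0 < h j := by
          rcases hc' with h1 | h1
          exacts [⟨c, by omega, le_refl c, h1⟩, ⟨c-1, le_refl _, by omega, h1⟩]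
        have hb1 : 0 < h (b - 1) := CT i (b-1) j (by omega) (by omega) hi hj
        have := N b
        nlinarith [hb1]
  · -- C1
    intro k
    dsimp only
    rw [show k - 1 - 1 = k - 2 from by ring, show k + 1 - 1 = k from by ring,
      show k - 2 - 1 = k - 3 from by ring]
    by_cases hz1 : h (k-2) = 0 ∧ h (k-1) = 0
    · rw [hz1.1, hz1.2]
      have A := gN (k - 2)
      rw [show k - 2 - 1 = k - 3 from by ring] at A
      rw [hz1.1] at A
      have B := gN k
      rw [hz1.2] at B
      have Cc := gN (k + 1)
      rw [show k + 1 - 1 = k from by ring] at Cc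
      nlinarith [mul_nonneg (mul_nonneg A B) Cc]
    · by_cases hz2 : h k = 0 ∧ h (k+1) = 0
      · rw [hz2.1, hz2.2]
        have A := gN (k - 1)
        rw [show k - 1 - 1 = k - 2 from by ring] at A
        have B := gN k
        rw [show k - 1 = k - 1 from rfl] at B
        rw [hz2.1] at B
        nlinarith [mul_nonneg A (mul_nonneg B B)]
      · -- h (k-1) > 0 and h k > 0 by contiguity
        have o1 : 0 < h (k-2) ∨ 0 < h (k-1) := by
          rcases not_and_or.mp hz1 with hh | hh
          exacts [Or.inl ((N (k-2)).lt_of_ne (Ne.symm hh)),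
            Or.inr ((N (k-1)).lt_of_ne (Ne.symm hh))]
        have o2 : 0 < h k ∨ 0 < h (k+1) := by
          rcases not_and_or.mp hz2 with hh | hh
          exacts [Or.inl ((N k).lt_of_ne (Ne.symm hh)),
            Or.inr ((N (k+1)).lt_of_ne (Ne.symm hh))]
        obtain ⟨i, hi1, hi2, hi⟩ : ∃ i, k - 2 ≤ i ∧ i ≤ k - 1 ∧ 0 < h i := by
          rcases o1 with h1 | h1
          exacts [⟨k-2, le_refl _, by omega, h1⟩, ⟨k-1, by omega, le_refl _, h1⟩]
        obtain ⟨j, hj1, hj2, hj⟩ : ∃ j, k ≤ j ∧ j ≤ k + 1 ∧ 0 < h j := by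
          rcases o2 with h1 | h1
          exacts [⟨k, le_refl _, by omega, h1⟩, ⟨k+1, by omega, le_refl _, h1⟩]
        have hp2 : 0 < h (k-1) := CT i (k-1) j (by omega) (by omega) hi hj
        have hp3 : 0 < h k := CT i k j (by omega) (by omega) hi hj
        have hV1 : 0 ≤ h (k-2) * h (k-1) ^ 2 - 2 * h (k-2) ^ 2 * h k
            + h (k-3) * h (k-1) * h k := by
          have := C (k-1)
          rw [show k - 1 - 1 = k - 2 from by ring, show k - 1 + 1 = k from by ring,
            show k - 1 - 2 = k - 3 from by ring] at this
          exact this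
        by_cases hz0 : h (k-2) = 0
        · -- left boundary case
          have h3z : h (k-3) = 0 := by
            by_contra hne
            have := CT (k-3) (k-2) (k-1) (by omega) (by omega)
              ((N (k-3)).lt_of_ne (Ne.symm hne)) hp2
            rw [hz0] at this; exact lt_irrefl 0 this
          have hA : 0 ≤ h k ^ 2 - 2 * h (k-1) * h (k+1) := by
            have hCk := C k
            rw [hz0] at hCk
            nlinarith [hCk, hp2]
          rw [hz0, h3z]
          have hN4 := N (k+1)
          nlinarith [mul_nonneg (mul_nonneg (mul_nonneg hr (mul_nonneg hr hr)) hp2.le) hA,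
            mul_nonneg (mul_nonneg (mul_nonneg hq0.le hq0.le) hr)
              (mul_nonneg (mul_nonneg hp2.le hp2.le) hp2.le)]
        · have hp1 : 0 < h (k-2) := (N (k-2)).lt_of_ne (Ne.symm hz0)
          have hU : 0 ≤ h (k-2) ^ 2 - h (k-3) * h (k-1) := by
            have := T (k-2) (k-2) (k-3) (k-1) (by ring) (by omega) (by omega) (by omega)
            nlinarith [this]
          by_cases hz4 : h (k+1) = 0
          · -- right boundary case
            have hvN : 0 ≤ h (k-1) ^ 2 - h (k-2) * h k := by
              have := T (k-1) (k-1) (k-2) k (by ring) (by omega) (by omega) (by omega)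
              nlinarith [this]
            rw [hz4]
            exact key_right (h (k-3)) (h (k-2)) (h (k-1)) (h k) q
              (N (k-3)) hp1 hp2 hp3 hq0.le hq1.le hU hvN hV1
          · have hp4 : 0 < h (k+1) := (N (k+1)).lt_of_ne (Ne.symm hz4)
            have hV2 : 0 ≤ h (k-1) * h k ^ 2 - 2 * h (k-1) ^ 2 * h (k+1)
                + h (k-2) * h k * h (k+1) := C k
            exact key_main (h (k-3)) (h (k-2)) (h (k-1)) (h k) (h (k+1)) q
              (N (k-3)) hp1 hp2 hp3 hp4 hq0.le hq1.le hU hV1 hV2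

lemma inv_bspmf (m : ℕ) (p : ℕ → ℝ) (hp : ∀ i ∈ range m, 0 ≤ p i ∧ p i ≤ 1) :
    BernInv (bernoulliSumPMF (range m) p) := by
  induction m with
  | zero => exact inv_ext (fun k => bspmf_zero p k) inv_delta
  | succ n ih =>
    have hpn : 0 ≤ p n ∧ p n ≤ 1 := hp n (by simp)
    have ihInv : BernInv (bernoulliSumPMF (range n) p) :=
      ih fun i hi => hp i (by simp at hi ⊢; omega)
    have hrec := bspmf_succ n p
    by_cases h0 : p n = 0
    · exact inv_ext (fun k => by rw [hrec k, h0]; ring) ihInv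
    · by_cases h1 : p n = 1
      · exact inv_ext (fun k => by
          show bernoulliSumPMF (range (n+1)) p k = bernoulliSumPMF (range n) p (k - 1)
          rw [hrec k, h1]; ring) (inv_shift ihInv)
      · have hq0 : 0 < p n := lt_of_le_of_ne hpn.1 (Ne.symm h0)
        have hq1 : p n < 1 := lt_of_le_of_ne hpn.2 h1
        exact inv_ext (fun k => by rw [hrec k])
          (step_inv (bernoulliSumPMF (range n) p) (p n) hq0 hq1 ihInv)

theorem bernoulli_sum_cubic_C1 (m : ℕ) (p : ℕ → ℝ)
    (hp : ∀ i ∈ Finset.range m, 0 ≤ p i ∧ p i ≤ 1)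
    (g : ℤ → ℝ) (hg : ∀ k, g k = bernoulliSumPMF (Finset.range m) p k) (k : ℤ) :
    0 ≤ g (k - 1) * g k ^ 2 - 2 * g (k - 1) ^ 2 * g (k + 1) + g (k - 2) * g k * g (k + 1) := by
  obtain ⟨N, T, CT, C⟩ := inv_bspmf m p hp
  simp only [hg]
  exact C k
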